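/- Let u ∈ L^1(Ω), K ∈ (0, μ(Ω)), t ≥ 0, and A ∈ 𝒜 with {|u| > t} ⊆ A ⊆ {|u| ≥ t} and μ(A) = K. Then |u|_K = ∫_A |u| dμ, i.e., A attains the supremum in the definition of the largest-K-norm. -/

import Mathlib

open MeasureTheory Set
open scoped ENNReal

/-- The largest-K-norm: `|u|_K = sup { ∫_B |u| dμ : B measurable, μ(B) ≤ K }`. -/
noncomputable def largestK {Ω : Type*} [MeasurableSpace Ω] (μ : Measure Ω) (K : ℝ≥0∞)
    (u : Ω → ℝ) : ℝ :=
  sSup {r : ℝ | ∃ B : Set Ω, MeasurableSet B ∧ μ B ≤ K ∧ r = ∫ x in B, |u x| ∂μ}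

/-- if `{|u| > t} ⊆ A ⊆ {|u| ≥ t}` and `μ A = K`, then `A` attains the
supremum in the definition of the largest-K-norm: `|u|_K = ∫_A |u| dμ`. -/
theorem stmt3 {Ω : Type*} [MeasurableSpace Ω] (μ : Measure Ω) [SigmaFinite μ]
    (u : Ω → ℝ) (hu : Integrable u μ) (K : ℝ≥0∞) (hK0 : 0 < K) (hK : K < μ Set.univ)
    (t : ℝ) (ht : 0 ≤ t) (A : Set Ω) (hA : MeasurableSet A)
    (h1 : {x | t < |u x|} ⊆ A) (h2 : A ⊆ {x | t ≤ |u x|}) (hμA : μ A = K) :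
    largestK μ K u = ∫ x in A, |u x| ∂μ := by
  have hKfin : K ≠ ⊤ := ne_top_of_lt hK
  have hAfin : μ A ≠ ⊤ := by rw [hμA]; exact hKfin
  have huabs : Integrable (fun x => |u x|) μ := hu.abs
  -- upper bound: for any measurable B with μ B ≤ K, ∫_B |u| ≤ ∫_A |u|
  have hub : ∀ B : Set Ω, MeasurableSet B → μ B ≤ K →
      (∫ x in B, |u x| ∂μ) ≤ ∫ x in A, |u x| ∂μ := by
    intro B hB hμB
    have hBfin : μ B ≠ ⊤ := ne_top_of_le_ne_top hKfin hμB
    have hBA : μ (B \ A) ≠ ⊤ := ne_top_of_le_ne_top hBfin (measure_mono diff_subset)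
    have hAB : μ (A \ B) ≠ ⊤ := ne_top_of_le_ne_top hAfin (measure_mono diff_subset)
    -- μ (B \ A) ≤ μ (A \ B)
    have hmeas : μ (B \ A) ≤ μ (A \ B) := by
      have e1 : μ (B ∩ A) + μ (B \ A) = μ B := measure_inter_add_diff B hA
      have e2 : μ (A ∩ B) + μ (A \ B) = μ A := measure_inter_add_diff A hB
      have hIfin : μ (A ∩ B) ≠ ⊤ := ne_top_of_le_ne_top hAfin (measure_mono inter_subset_left)
      have : μ (A ∩ B) + μ (B \ A) ≤ μ (A ∩ B) + μ (A \ B) := by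
        calc μ (A ∩ B) + μ (B \ A) = μ (B ∩ A) + μ (B \ A) := by rw [inter_comm]
          _ = μ B := e1
          _ ≤ K := hμB
          _ = μ A := hμA.symm
          _ = μ (A ∩ B) + μ (A \ B) := e2.symm
      exact (ENNReal.add_le_add_iff_left hIfin).mp this
    -- ∫_{B\A} |u| ≤ t * μ(B\A).toReal
    have hle1 : (∫ x in B \ A, |u x| ∂μ) ≤ t * (μ (B \ A)).toReal := by
      have : (∫ x in B \ A, |u x| ∂μ) ≤ ∫ _ in B \ A, t ∂μ := by
        apply setIntegral_mono_on (huabs.restrict) (integrableOn_const hBA)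
          (hB.diff hA)
        intro x hx
        by_contra hc
        push_neg at hc
        exact hx.2 (h1 hc)
      simpa [mul_comm, Measure.real] using this
    have hle2 : t * (μ (A \ B)).toReal ≤ ∫ x in A \ B, |u x| ∂μ := by
      have : (∫ _ in A \ B, t ∂μ) ≤ ∫ x in A \ B, |u x| ∂μ := by
        apply setIntegral_mono_on (integrableOn_const hAB) (huabs.restrict)
          (hA.diff hB)
        intro x hx
        exact h2 hx.1
      simpa [mul_comm, Measure.real] using this
    have hmr : (μ (B \ A)).toReal ≤ (μ (A \ B)).toReal :=
      ENNReal.toReal_mono hAB hmeas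
    have key : (∫ x in B \ A, |u x| ∂μ) ≤ ∫ x in A \ B, |u x| ∂μ :=
      hle1.trans ((mul_le_mul_of_nonneg_left hmr ht).trans hle2)
    have hd1 : Disjoint (B ∩ A) (B \ A) := disjoint_sdiff_right.mono_left inter_subset_right
    have hd2 : Disjoint (B ∩ A) (A \ B) := disjoint_sdiff_right.mono_left inter_subset_left
    have sB : (∫ x in B, |u x| ∂μ) = (∫ x in B ∩ A, |u x| ∂μ) + ∫ x in B \ A, |u x| ∂μ := by
      rw [← setIntegral_union hd1 (hB.diff hA) (huabs.restrict) (huabs.restrict),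
        inter_union_diff]
    have sA : (∫ x in A, |u x| ∂μ) = (∫ x in B ∩ A, |u x| ∂μ) + ∫ x in A \ B, |u x| ∂μ := by
      rw [← setIntegral_union hd2 (hA.diff hB) (huabs.restrict) (huabs.restrict),
        inter_comm, inter_union_diff]
    rw [sA, sB]
    exact add_le_add le_rfl key
  have hmem : (∫ x in A, |u x| ∂μ) ∈
      {r : ℝ | ∃ B : Set Ω, MeasurableSet B ∧ μ B ≤ K ∧ r = ∫ x in B, |u x| ∂μ} :=
    ⟨A, hA, hμA.le, rfl⟩
  apply le_antisymm
  · apply csSup_le ⟨_, hmem⟩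
    rintro r ⟨B, hB, hμB, rfl⟩
    exact hub B hB hμB
  · exact le_csSup ⟨_, fun r ⟨B, hB, hμB, hr⟩ => hr ▸ hub B hB hμB⟩ hmem
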